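/- arXiv:2308.11016 — 2 statements merged into one kernel-verified Lean document; each statement's English description precedes it below -/
import Mathlib

section
/- If the forward shift S is bounded on H^p(T), then for every m ∈ ℕ, ‖S^m‖ = (sup{K(m,n−m)·γ(n−m)/γ(n) : n ≥ m})^{1/p}. -/
open scoped BigOperators
open Classical

/-- An infinite, locally finite rooted tree, presented combinatorially via a
parent function and a level (distance-to-root) function.  Every level is a
finite nonempty set of vertices. -/
structure HTree where
  V : Type
  root : V
  parent : V → V
  level : V → ℕ
  level_root : level root = 0
  root_of_level_zero : ∀ v, level v = 0 → v = root
  level_parent : ∀ v, v ≠ root → level (parent v) + 1 = level v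
  finite_level : ∀ n : ℕ, {v : V | level v = n}.Finite
  nonempty_level : ∀ n : ℕ, {v : V | level v = n}.Nonempty

namespace HTree

variable (T : HTree)

/-- The finite set of vertices at level `n`. -/
noncomputable def levelFinset (n : ℕ) : Finset T.V := (T.finite_level n).toFinset

/-- `γ(n)`, the number of vertices at level `n`. -/
noncomputable def gamma (n : ℕ) : ℕ := (T.levelFinset n).card

/-- The set of `m`-children of a vertex `v`. -/
noncomputable def nChildrenFinset (m : ℕ) (v : T.V) : Finset T.V :=
  (T.levelFinset (T.level v + m)).filter (fun w => T.parent^[m] w = v)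

/-- `γ(m,v)`, the number of `m`-children of `v`. -/
noncomputable def numNChildren (m : ℕ) (v : T.V) : ℕ := (T.nChildrenFinset m v).card

/-- The set of children of a vertex. -/
noncomputable def childrenFinset (v : T.V) : Finset T.V := T.nChildrenFinset 1 v

/-- `γ(1,v)`, the number of children of `v`. -/
noncomputable def numChildren (v : T.V) : ℕ := T.numNChildren 1 v

/-- `K(m,r)`, the maximal number of `m`-children among vertices at level `r`. -/
noncomputable def K (m r : ℕ) : ℕ := (T.levelFinset r).sup (fun v => T.numNChildren m v)

/-- `M_p^p(n,f)`, the `p`-th power of the `p`-th mean of `|f|` over level `n`. -/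
noncomputable def Mpp (p : ℝ) (f : T.V → ℂ) (n : ℕ) : ℝ :=
  (1 / (T.gamma n : ℝ)) * ∑ v ∈ T.levelFinset n, ‖f v‖ ^ p

/-- `M_p(n,f)`, the `p`-th mean of `|f|` over level `n`. -/
noncomputable def Mp (p : ℝ) (f : T.V → ℂ) (n : ℕ) : ℝ := (T.Mpp p f n) ^ (1 / p)

/-- Membership in the Hardy space `H^p(T)`. -/
def MemHp (p : ℝ) (f : T.V → ℂ) : Prop := ∃ C : ℝ, ∀ n : ℕ, T.Mp p f n ≤ C

/-- Membership in the little Hardy space `H^p_0(T)`. -/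
def MemHp0 (p : ℝ) (f : T.V → ℂ) : Prop :=
  Filter.Tendsto (T.Mp p f) Filter.atTop (nhds 0)

/-- The `H^p` norm, `sup_n M_p(n,f)`. -/
noncomputable def Hnorm (p : ℝ) (f : T.V → ℂ) : ℝ := ⨆ n : ℕ, T.Mp p f n

/-- The forward shift `(Sf)(v) = f(parent v)`, `(Sf)(root) = 0`. -/
noncomputable def S (f : T.V → ℂ) : T.V → ℂ := fun v => if v = T.root then 0 else f (T.parent v)

/-- The backward shift `(Bf)(v) = Σ_{w child of v} f(w)`. -/
noncomputable def B (f : T.V → ℂ) : T.V → ℂ := fun v => ∑ w ∈ T.childrenFinset v, f w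

/-- An operator `A` is bounded on the subspace described by `Mem`, with the
`H^p` norm. -/
def BoundedOn (A : (T.V → ℂ) → (T.V → ℂ)) (Mem : (T.V → ℂ) → Prop) (p : ℝ) : Prop :=
  ∃ C : ℝ, 0 ≤ C ∧ ∀ f, Mem f → Mem (A f) ∧ T.Hnorm p (A f) ≤ C * T.Hnorm p f

/-- The operator norm of `A` on the subspace described by `Mem`. -/
noncomputable def opNorm (A : (T.V → ℂ) → (T.V → ℂ)) (Mem : (T.V → ℂ) → Prop) (p : ℝ) : ℝ :=
  sInf {C : ℝ | 0 ≤ C ∧ ∀ f, Mem f → Mem (A f) ∧ T.Hnorm p (A f) ≤ C * T.Hnorm p f}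

/-- Hypercyclicity of an operator `A` on the subspace described by `Mem`. -/
def Hypercyclic (A : (T.V → ℂ) → (T.V → ℂ)) (Mem : (T.V → ℂ) → Prop) (p : ℝ) : Prop :=
  ∃ f, Mem f ∧ ∀ g, Mem g → ∀ ε : ℝ, 0 < ε →
    ∃ N : ℕ, T.Hnorm p (fun v => A^[N] f v - g v) < ε

end HTree

namespace HTree

variable (T : HTree)

lemma mem_levelFinset (n : ℕ) (v : T.V) : v ∈ T.levelFinset n ↔ T.level v = n := by
  simp [levelFinset]

lemma gamma_pos (n : ℕ) : 0 < T.gamma n := by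
  rw [gamma, Finset.card_pos]
  obtain ⟨v, hv⟩ := T.nonempty_level n
  exact ⟨v, (T.mem_levelFinset n v).2 hv⟩

lemma gamma_pos' (n : ℕ) : (0 : ℝ) < (T.gamma n : ℝ) := by
  exact_mod_cast T.gamma_pos n

lemma level_parent_iterate (k : ℕ) (v : T.V) (h : k ≤ T.level v) :
    T.level (T.parent^[k] v) = T.level v - k := by
  induction k with
  | zero => simp
  | succ j ih =>
    have hj : j ≤ T.level v := Nat.le_of_succ_le h
    have h1 : T.level (T.parent^[j] v) = T.level v - j := ih hj
    have hne : T.parent^[j] v ≠ T.root := by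
      intro hr
      have : T.level (T.parent^[j] v) = 0 := by rw [hr, T.level_root]
      omega
    have := T.level_parent _ hne
    rw [Function.iterate_succ_apply']
    omega

lemma S_iterate (m : ℕ) (f : T.V → ℂ) (v : T.V) :
    T.S^[m] f v = if T.level v < m then 0 else f (T.parent^[m] v) := by
  induction m generalizing f v with
  | zero => simp
  | succ j ih =>
    rw [Function.iterate_succ_apply', S]
    by_cases hr : v = T.root
    · have : T.level v = 0 := by rw [hr, T.level_root]
      simp [hr, this, T.level_root]
    · have hl := T.level_parent v hr
      rw [if_neg hr, ih]
      have : T.level (T.parent v) < j ↔ T.level v < j + 1 := by omega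
      rw [Function.iterate_succ_apply]
      simp [this]

lemma sum_level_parent (r m : ℕ) (g : T.V → ℝ) :
    ∑ v ∈ T.levelFinset (r + m), g (T.parent^[m] v)
      = ∑ u ∈ T.levelFinset r, (T.numNChildren m u : ℝ) * g u := by
  have hmaps : ∀ v ∈ T.levelFinset (r + m), T.parent^[m] v ∈ T.levelFinset r := by
    intro v hv
    rw [T.mem_levelFinset] at hv ⊢
    rw [T.level_parent_iterate m v (by omega)]
    omega
  rw [← Finset.sum_fiberwise_of_maps_to hmaps (fun v => g (T.parent^[m] v))]
  refine Finset.sum_congr rfl fun u hu => ?_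
  rw [T.mem_levelFinset] at hu
  have hfib : (T.levelFinset (r + m)).filter (fun v => T.parent^[m] v = u)
      = T.nChildrenFinset m u := by
    rw [nChildrenFinset, hu]
  rw [hfib, numNChildren]
  calc ∑ w ∈ T.nChildrenFinset m u, g (T.parent^[m] w)
      = ∑ _w ∈ T.nChildrenFinset m u, g u := by
        refine Finset.sum_congr rfl fun w hw => ?_
        rw [nChildrenFinset, Finset.mem_filter] at hw
        rw [hw.2]
    _ = (T.nChildrenFinset m u).card * g u := by rw [Finset.sum_const, nsmul_eq_mul]

end HTree
namespace HTree

variable (T : HTree)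

lemma term_nonneg (p : ℝ) (f : T.V → ℂ) (v : T.V) : 0 ≤ ‖f v‖ ^ p :=
  Real.rpow_nonneg (norm_nonneg _) p

lemma Mpp_nonneg (p : ℝ) (f : T.V → ℂ) (n : ℕ) : 0 ≤ T.Mpp p f n := by
  apply mul_nonneg
  · positivity
  · exact Finset.sum_nonneg fun v _ => T.term_nonneg p f v

lemma Mp_nonneg (p : ℝ) (f : T.V → ℂ) (n : ℕ) : 0 ≤ T.Mp p f n :=
  Real.rpow_nonneg (T.Mpp_nonneg p f n) _

lemma Hnorm_nonneg (p : ℝ) (f : T.V → ℂ) : 0 ≤ T.Hnorm p f :=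
  Real.iSup_nonneg (T.Mp_nonneg p f)

lemma bddAbove_of_memHp {p : ℝ} {f : T.V → ℂ} (hf : T.MemHp p f) :
    BddAbove (Set.range (T.Mp p f)) := by
  obtain ⟨C, hC⟩ := hf
  exact ⟨C, by rintro x ⟨n, rfl⟩; exact hC n⟩

lemma Mp_le_Hnorm {p : ℝ} {f : T.V → ℂ} (hf : T.MemHp p f) (n : ℕ) :
    T.Mp p f n ≤ T.Hnorm p f :=
  le_ciSup (T.bddAbove_of_memHp hf) n

lemma Mpp_S_iterate_lt {p : ℝ} (hp : p ≠ 0) (m : ℕ) (f : T.V → ℂ) (n : ℕ) (hn : n < m) :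
    T.Mpp p (T.S^[m] f) n = 0 := by
  rw [Mpp]
  have : ∀ v ∈ T.levelFinset n, ‖T.S^[m] f v‖ ^ p = 0 := by
    intro v hv
    rw [T.mem_levelFinset] at hv
    rw [T.S_iterate, if_pos (by omega)]
    simp [Real.zero_rpow hp]
  rw [Finset.sum_congr rfl this, Finset.sum_const, smul_zero, mul_zero]

lemma Mpp_S_iterate_eq (p : ℝ) (m r : ℕ) (f : T.V → ℂ) :
    T.Mpp p (T.S^[m] f) (r + m)
      = (1 / (T.gamma (r + m) : ℝ)) *
        ∑ u ∈ T.levelFinset r, (T.numNChildren m u : ℝ) * ‖f u‖ ^ p := by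
  rw [Mpp, ← T.sum_level_parent r m (fun u => ‖f u‖ ^ p)]
  congr 1
  refine Finset.sum_congr rfl fun v hv => ?_
  rw [T.mem_levelFinset] at hv
  rw [T.S_iterate, if_neg (by omega)]

lemma Mpp_S_iterate_le (p : ℝ) (m r : ℕ) (f : T.V → ℂ) :
    T.Mpp p (T.S^[m] f) (r + m)
      ≤ ((T.K m r : ℝ) * (T.gamma r : ℝ) / (T.gamma (r + m) : ℝ)) * T.Mpp p f r := by
  rw [T.Mpp_S_iterate_eq p m r f, Mpp]
  have h1 : ∑ u ∈ T.levelFinset r, (T.numNChildren m u : ℝ) * ‖f u‖ ^ p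
      ≤ (T.K m r : ℝ) * ∑ u ∈ T.levelFinset r, ‖f u‖ ^ p := by
    rw [Finset.mul_sum]
    refine Finset.sum_le_sum fun u hu => ?_
    have hK : T.numNChildren m u ≤ T.K m r := Finset.le_sup hu
    exact mul_le_mul_of_nonneg_right (by exact_mod_cast hK) (T.term_nonneg p f u)
  have hγ := T.gamma_pos' (r + m)
  have hγr := T.gamma_pos' r
  calc (1 / (T.gamma (r + m) : ℝ)) * ∑ u ∈ T.levelFinset r, (T.numNChildren m u : ℝ) * ‖f u‖ ^ p
      ≤ (1 / (T.gamma (r + m) : ℝ)) * ((T.K m r : ℝ) * ∑ u ∈ T.levelFinset r, ‖f u‖ ^ p) :=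
        mul_le_mul_of_nonneg_left h1 (by positivity)
    _ = ((T.K m r : ℝ) * (T.gamma r : ℝ) / (T.gamma (r + m) : ℝ)) *
          ((1 / (T.gamma r : ℝ)) * ∑ u ∈ T.levelFinset r, ‖f u‖ ^ p) := by
        field_simp

end HTree
namespace HTree

variable (T : HTree)

lemma iter_bounded {p : ℝ} (hb : T.BoundedOn T.S (T.MemHp p) p) (m : ℕ) :
    ∃ C : ℝ, 0 ≤ C ∧ ∀ f, T.MemHp p f →
      T.MemHp p (T.S^[m] f) ∧ T.Hnorm p (T.S^[m] f) ≤ C * T.Hnorm p f := by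
  obtain ⟨C₀, hC₀, h⟩ := hb
  refine ⟨C₀ ^ m, pow_nonneg hC₀ m, ?_⟩
  induction m with
  | zero =>
    intro f hf
    simp only [Function.iterate_zero, id_eq, pow_zero, one_mul]
    exact ⟨hf, le_refl _⟩
  | succ j ih =>
    intro f hf
    obtain ⟨hmem, hle⟩ := ih f hf
    obtain ⟨hmem2, hle2⟩ := h _ hmem
    rw [Function.iterate_succ_apply']
    refine ⟨hmem2, hle2.trans ?_⟩
    calc C₀ * T.Hnorm p (T.S^[j] f) ≤ C₀ * (C₀ ^ j * T.Hnorm p f) :=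
          mul_le_mul_of_nonneg_left hle hC₀
      _ = C₀ ^ (j + 1) * T.Hnorm p f := by ring

lemma key_lower {p : ℝ} (hp : 1 ≤ p) (m : ℕ) (C : ℝ) (hC : 0 ≤ C)
    (h : ∀ f, T.MemHp p f →
      T.MemHp p (T.S^[m] f) ∧ T.Hnorm p (T.S^[m] f) ≤ C * T.Hnorm p f) (n : ℕ) :
    (T.K m n : ℝ) * (T.gamma n : ℝ) / (T.gamma (n + m) : ℝ) ≤ C ^ p := by
  have hp0 : (0 : ℝ) < p := lt_of_lt_of_le one_pos hp
  have hpne : p ≠ 0 := ne_of_gt hp0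
  -- pick a vertex of level n with maximal number of m-children
  have hne : (T.levelFinset n).Nonempty := by
    obtain ⟨v, hv⟩ := T.nonempty_level n
    exact ⟨v, (T.mem_levelFinset n v).2 hv⟩
  obtain ⟨u₀, hu₀mem, hu₀⟩ := Finset.exists_mem_eq_sup _ hne (fun v => T.numNChildren m v)
  have hu₀lvl : T.level u₀ = n := (T.mem_levelFinset n u₀).1 hu₀mem
  have hu₀' : T.K m n = T.numNChildren m u₀ := hu₀
  set f₀ : T.V → ℂ := fun v => if v = u₀ then 1 else 0 with hf₀
  have hval : ∀ v : T.V, ‖f₀ v‖ ^ p = if v = u₀ then 1 else 0 := by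
    intro v
    by_cases hv : v = u₀ <;> simp [hf₀, hv, Real.zero_rpow hpne]
  have hMpp : ∀ k : ℕ, T.Mpp p f₀ k
      = (1 / (T.gamma k : ℝ)) * (if u₀ ∈ T.levelFinset k then 1 else 0) := by
    intro k
    rw [Mpp]
    congr 1
    rw [Finset.sum_congr rfl (fun v _ => hval v), Finset.sum_ite_eq']
  have hmem₀ : T.MemHp p f₀ := by
    refine ⟨1, fun k => ?_⟩
    have h1 : T.Mpp p f₀ k ≤ 1 := by
      rw [hMpp k]
      have hγ := T.gamma_pos' k
      have : (if u₀ ∈ T.levelFinset k then (1:ℝ) else 0) ≤ 1 := by split <;> norm_num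
      calc (1 / (T.gamma k : ℝ)) * (if u₀ ∈ T.levelFinset k then 1 else 0)
          ≤ (1 / (T.gamma k : ℝ)) * 1 := mul_le_mul_of_nonneg_left this (by positivity)
        _ ≤ 1 := by
            rw [mul_one]
            rw [div_le_one hγ]
            exact_mod_cast T.gamma_pos k
    calc T.Mp p f₀ k ≤ 1 ^ (1/p) :=
          Real.rpow_le_rpow (T.Mpp_nonneg p f₀ k) h1 (by positivity)
      _ = 1 := Real.one_rpow _
  have hHle : T.Hnorm p f₀ ≤ (1 / (T.gamma n : ℝ)) ^ (1/p) := by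
    refine ciSup_le fun k => ?_
    have h1 : T.Mpp p f₀ k ≤ 1 / (T.gamma n : ℝ) := by
      rw [hMpp k]
      by_cases hk : u₀ ∈ T.levelFinset k
      · have : k = n := by rw [T.mem_levelFinset] at hk; omega
        subst this
        rw [if_pos hk, mul_one]
      · simp only [hk, if_false, mul_zero]
        positivity
    exact Real.rpow_le_rpow (T.Mpp_nonneg p f₀ k) h1 (by positivity)
  have hMppS : T.Mpp p (T.S^[m] f₀) (n + m) = (T.K m n : ℝ) / (T.gamma (n + m) : ℝ) := by
    rw [T.Mpp_S_iterate_eq p m n f₀]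
    have : ∀ u ∈ T.levelFinset n, (T.numNChildren m u : ℝ) * ‖f₀ u‖ ^ p
        = if u = u₀ then (T.K m n : ℝ) else 0 := by
      intro u _
      rw [hval u]
      by_cases hu : u = u₀
      · subst hu; rw [if_pos rfl, if_pos rfl, mul_one, ← hu₀']
      · rw [if_neg hu, if_neg hu, mul_zero]
    rw [Finset.sum_congr rfl this, Finset.sum_ite_eq', if_pos hu₀mem]
    ring
  obtain ⟨hmemS, hleS⟩ := h f₀ hmem₀
  have hchain : ((T.K m n : ℝ) / (T.gamma (n + m) : ℝ)) ^ (1/p)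
      ≤ C * (1 / (T.gamma n : ℝ)) ^ (1/p) := by
    calc ((T.K m n : ℝ) / (T.gamma (n + m) : ℝ)) ^ (1/p)
        = T.Mp p (T.S^[m] f₀) (n + m) := by rw [Mp, hMppS]
      _ ≤ T.Hnorm p (T.S^[m] f₀) := T.Mp_le_Hnorm hmemS (n + m)
      _ ≤ C * T.Hnorm p f₀ := hleS
      _ ≤ C * (1 / (T.gamma n : ℝ)) ^ (1/p) := mul_le_mul_of_nonneg_left hHle hC
  -- raise to the power p
  have ha : (0:ℝ) ≤ (T.K m n : ℝ) / (T.gamma (n + m) : ℝ) := by positivity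
  have hb2 : (0:ℝ) ≤ 1 / (T.gamma n : ℝ) := by positivity
  have hinv : (1/p) * p = 1 := by field_simp
  have hpow : (T.K m n : ℝ) / (T.gamma (n + m) : ℝ) ≤ C ^ p * (1 / (T.gamma n : ℝ)) := by
    have h2 : (((T.K m n : ℝ) / (T.gamma (n + m) : ℝ)) ^ (1/p)) ^ p
        ≤ (C * (1 / (T.gamma n : ℝ)) ^ (1/p)) ^ p :=
      Real.rpow_le_rpow (Real.rpow_nonneg ha _) hchain (le_of_lt hp0)
    rwa [← Real.rpow_mul ha, hinv, Real.rpow_one,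
      Real.mul_rpow hC (Real.rpow_nonneg hb2 _), ← Real.rpow_mul hb2, hinv,
      Real.rpow_one] at h2
  have hγn := T.gamma_pos' n
  calc (T.K m n : ℝ) * (T.gamma n : ℝ) / (T.gamma (n + m) : ℝ)
      = ((T.K m n : ℝ) / (T.gamma (n + m) : ℝ)) * (T.gamma n : ℝ) := by ring
    _ ≤ (C ^ p * (1 / (T.gamma n : ℝ))) * (T.gamma n : ℝ) :=
        mul_le_mul_of_nonneg_right hpow (by positivity)
    _ = C ^ p := by field_simp

end HTree
namespace HTree

variable (T : HTree)

lemma upper_bound {p : ℝ} (hp : 1 ≤ p) (m : ℕ)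
    (hbdd : BddAbove (Set.range fun n =>
      (T.K m n : ℝ) * (T.gamma n : ℝ) / (T.gamma (n + m) : ℝ)))
    {f : T.V → ℂ} (hf : T.MemHp p f) (n : ℕ) :
    T.Mp p (T.S^[m] f) n
      ≤ (⨆ n : ℕ, (T.K m n : ℝ) * (T.gamma n : ℝ) / (T.gamma (n + m) : ℝ)) ^ (1/p)
          * T.Hnorm p f := by
  have hp0 : (0 : ℝ) < p := lt_of_lt_of_le one_pos hp
  have hpne : p ≠ 0 := ne_of_gt hp0
  set L := ⨆ n : ℕ, (T.K m n : ℝ) * (T.gamma n : ℝ) / (T.gamma (n + m) : ℝ) with hL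
  have hL0 : 0 ≤ L := Real.iSup_nonneg fun n => by positivity
  have hrhs : 0 ≤ L ^ (1/p) * T.Hnorm p f :=
    mul_nonneg (Real.rpow_nonneg hL0 _) (T.Hnorm_nonneg p f)
  by_cases hn : n < m
  · rw [Mp, T.Mpp_S_iterate_lt hpne m f n hn, Real.zero_rpow (by positivity)]
    exact hrhs
  · obtain ⟨r, rfl⟩ : ∃ r, n = r + m := ⟨n - m, by omega⟩
    have h1 : T.Mpp p (T.S^[m] f) (r + m) ≤ L * T.Mpp p f r := by
      refine (T.Mpp_S_iterate_le p m r f).trans ?_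
      exact mul_le_mul_of_nonneg_right (le_ciSup hbdd r) (T.Mpp_nonneg p f r)
    calc T.Mp p (T.S^[m] f) (r + m)
        ≤ (L * T.Mpp p f r) ^ (1/p) :=
          Real.rpow_le_rpow (T.Mpp_nonneg p _ _) h1 (by positivity)
      _ = L ^ (1/p) * T.Mp p f r := by
          rw [Real.mul_rpow hL0 (T.Mpp_nonneg p f r)]; rfl
      _ ≤ L ^ (1/p) * T.Hnorm p f :=
          mul_le_mul_of_nonneg_left (T.Mp_le_Hnorm hf r) (Real.rpow_nonneg hL0 _)

end HTree

/-- norm of the powers of the forward shift on `H^p(T)`. -/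
theorem forward_shift_power_norm (T : HTree) (p : ℝ) (hp : 1 ≤ p)
    (hb : T.BoundedOn T.S (T.MemHp p) p) (m : ℕ) (hm : 1 ≤ m) :
    T.opNorm ((T.S)^[m]) (T.MemHp p) p =
      (⨆ n : ℕ, (T.K m n : ℝ) * (T.gamma n : ℝ) / (T.gamma (n + m) : ℝ)) ^ (1 / p) := by
  have hp0 : (0 : ℝ) < p := lt_of_lt_of_le one_pos hp
  have hpne : p ≠ 0 := ne_of_gt hp0
  obtain ⟨Cm, hCm0, hCm⟩ := T.iter_bounded hb m
  have hbdd : BddAbove (Set.range fun n =>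
      (T.K m n : ℝ) * (T.gamma n : ℝ) / (T.gamma (n + m) : ℝ)) :=
    ⟨Cm ^ p, by rintro x ⟨n, rfl⟩; exact T.key_lower hp m Cm hCm0 hCm n⟩
  set L := ⨆ n : ℕ, (T.K m n : ℝ) * (T.gamma n : ℝ) / (T.gamma (n + m) : ℝ) with hL
  have hL0 : 0 ≤ L := Real.iSup_nonneg fun n => by positivity
  have hmemSet : L ^ (1/p) ∈ {C : ℝ | 0 ≤ C ∧ ∀ f, T.MemHp p f →
      T.MemHp p (T.S^[m] f) ∧ T.Hnorm p (T.S^[m] f) ≤ C * T.Hnorm p f} := by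
    refine ⟨Real.rpow_nonneg hL0 _, fun f hf => ?_⟩
    have hub := T.upper_bound hp m hbdd hf
    exact ⟨⟨L ^ (1/p) * T.Hnorm p f, hub⟩, ciSup_le hub⟩
  rw [HTree.opNorm]
  apply le_antisymm
  · exact csInf_le ⟨0, fun C hC => hC.1⟩ hmemSet
  · refine le_csInf ⟨_, hmemSet⟩ ?_
    rintro C ⟨hC0, hC⟩
    have hLC : L ≤ C ^ p := ciSup_le fun n => T.key_lower hp m C hC0 hC n
    calc L ^ (1/p) ≤ (C ^ p) ^ (1/p) :=
          Real.rpow_le_rpow hL0 hLC (by positivity)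
      _ = C := by
          rw [← Real.rpow_mul hC0, mul_one_div_cancel hpne, Real.rpow_one]
end

section
/- If there is a sequence (s_n) of positive integers such that every vertex v of T has exactly s_{|v|+1} children, then the forward shift S is an isometry on H^p(T). -/
open scoped BigOperators
open Classical

section Aux

variable (T : HTree)

lemma HTree.mem_levelFinset_s7 {n : ℕ} {v : T.V} : v ∈ T.levelFinset n ↔ T.level v = n := by
  simp [HTree.levelFinset, Set.Finite.mem_toFinset]

lemma HTree.parent_mem {n : ℕ} {v : T.V} (hv : v ∈ T.levelFinset (n + 1)) :
    T.parent v ∈ T.levelFinset n := by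
  rw [HTree.mem_levelFinset_s7] at hv ⊢
  have hvr : v ≠ T.root := by
    intro h; rw [h, T.level_root] at hv; exact Nat.succ_ne_zero n hv.symm
  have := T.level_parent v hvr
  omega

lemma HTree.children_eq_fiber {n : ℕ} {w : T.V} (hw : w ∈ T.levelFinset n) :
    T.childrenFinset w = (T.levelFinset (n + 1)).filter (fun v => T.parent v = w) := by
  rw [HTree.mem_levelFinset_s7] at hw
  simp [HTree.childrenFinset, HTree.nChildrenFinset, hw, Function.iterate_one]

lemma HTree.Mpp_nonneg_s7 (p : ℝ) (f : T.V → ℂ) (n : ℕ) : 0 ≤ T.Mpp p f n := by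
  apply mul_nonneg (by positivity)
  exact Finset.sum_nonneg fun v _ => Real.rpow_nonneg (norm_nonneg _) p

lemma HTree.Mp_nonneg_s7 (p : ℝ) (f : T.V → ℂ) (n : ℕ) : 0 ≤ T.Mp p f n :=
  Real.rpow_nonneg (T.Mpp_nonneg_s7 p f n) _

lemma HTree.gamma_pos_s7 (n : ℕ) : 0 < T.gamma n := by
  rw [HTree.gamma, Finset.card_pos]
  obtain ⟨v, hv⟩ := T.nonempty_level n
  exact ⟨v, (T.mem_levelFinset_s7).2 hv⟩

end Aux

section Main

variable (T : HTree) (p : ℝ) (hp : 1 ≤ p)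
  (s : ℕ → ℕ) (hs : ∀ n, 0 < s n)
  (hreg : ∀ v : T.V, T.numChildren v = s (T.level v + 1))

include hreg in
lemma gamma_succ (n : ℕ) : T.gamma (n + 1) = s (n + 1) * T.gamma n := by
  have h := Finset.sum_fiberwise_of_maps_to (t := T.levelFinset n)
    (fun v hv => T.parent_mem hv) (fun _ : T.V => (1 : ℕ))
  simp only [Finset.sum_const, smul_eq_mul, mul_one] at h
  have : ∀ w ∈ T.levelFinset n,
      ((T.levelFinset (n+1)).filter (fun v => T.parent v = w)).card = s (n + 1) := by
    intro w hw
    rw [← T.children_eq_fiber hw]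
    have := hreg w
    rw [HTree.numChildren, HTree.numNChildren] at this
    rw [(T.mem_levelFinset_s7).1 hw] at this
    exact this
  rw [Finset.sum_congr rfl this] at h
  simp only [Finset.sum_const, smul_eq_mul, mul_one] at h
  rw [HTree.gamma, HTree.gamma, ← h]
  ring

include hreg in
lemma sum_shift (f : T.V → ℂ) (n : ℕ) :
    ∑ v ∈ T.levelFinset (n + 1), ‖T.S f v‖ ^ p
      = (s (n + 1) : ℝ) * ∑ w ∈ T.levelFinset n, ‖f w‖ ^ p := by
  have hroot : ∀ v ∈ T.levelFinset (n + 1), T.S f v = f (T.parent v) := by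
    intro v hv
    rw [HTree.mem_levelFinset_s7] at hv
    have : v ≠ T.root := by
      intro h; rw [h, T.level_root] at hv; exact Nat.succ_ne_zero n hv.symm
    simp [HTree.S, this]
  rw [Finset.sum_congr rfl (fun v hv => by rw [hroot v hv])]
  rw [← Finset.sum_fiberwise_of_maps_to' (t := T.levelFinset n)
    (fun v hv => T.parent_mem hv) (fun w => ‖f w‖ ^ p)]
  rw [Finset.mul_sum]
  refine Finset.sum_congr rfl fun w hw => ?_
  rw [Finset.sum_const, ← T.children_eq_fiber hw]
  have hc := hreg w
  rw [HTree.numChildren, HTree.numNChildren] at hc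
  rw [HTree.childrenFinset, hc, (T.mem_levelFinset_s7).1 hw, nsmul_eq_mul]

include hs hreg in
lemma Mp_shift (f : T.V → ℂ) (n : ℕ) : T.Mp p (T.S f) (n + 1) = T.Mp p f n := by
  unfold HTree.Mp
  congr 1
  unfold HTree.Mpp
  rw [sum_shift T p s hreg f n, gamma_succ T s hreg n]
  have h1 : (0 : ℝ) < s (n + 1) := by exact_mod_cast hs (n + 1)
  have h2 : (0 : ℝ) < T.gamma n := by exact_mod_cast T.gamma_pos_s7 n
  push_cast
  field_simp

include hp in
lemma Mp_shift_zero (f : T.V → ℂ) : T.Mp p (T.S f) 0 = 0 := by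
  have hp0 : p ≠ 0 := by positivity
  have : T.Mpp p (T.S f) 0 = 0 := by
    unfold HTree.Mpp
    rw [Finset.sum_eq_zero, mul_zero]
    intro v hv
    rw [HTree.mem_levelFinset_s7] at hv
    have : v = T.root := T.root_of_level_zero v hv
    simp [HTree.S, this, Real.zero_rpow hp0]
  rw [HTree.Mp, this, Real.zero_rpow (by positivity)]

end Main

/-- if all vertices at the same level have the same number of children,
the forward shift is an isometry on `H^p(T)`. -/
theorem forward_shift_isometry_of_level_regular (T : HTree) (p : ℝ) (hp : 1 ≤ p)
    (s : ℕ → ℕ) (hs : ∀ n, 0 < s n)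
    (hreg : ∀ v : T.V, T.numChildren v = s (T.level v + 1)) :
    ∀ f : T.V → ℂ, T.MemHp p f →
      T.MemHp p (T.S f) ∧ T.Hnorm p (T.S f) = T.Hnorm p f := by
  intro f hf
  obtain ⟨C, hC⟩ := hf
  have hMS : ∀ n, T.Mp p (T.S f) n ≤ max C 0 := by
    intro n
    cases n with
    | zero => rw [Mp_shift_zero T p hp f]; exact le_max_right _ _
    | succ m =>
      rw [Mp_shift T p s hs hreg f m]
      exact le_max_of_le_left (hC m)
  refine ⟨⟨max C 0, hMS⟩, ?_⟩
  have hbddf : BddAbove (Set.range (T.Mp p f)) := ⟨C, by rintro _ ⟨n, rfl⟩; exact hC n⟩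
  have hbddS : BddAbove (Set.range (T.Mp p (T.S f))) :=
    ⟨max C 0, by rintro _ ⟨n, rfl⟩; exact hMS n⟩
  apply le_antisymm
  · apply ciSup_le
    intro n
    cases n with
    | zero =>
      rw [Mp_shift_zero T p hp f]
      exact le_ciSup_of_le hbddf 0 (T.Mp_nonneg_s7 p f 0)
    | succ m =>
      rw [Mp_shift T p s hs hreg f m]
      exact le_ciSup hbddf m
  · apply ciSup_le
    intro n
    calc T.Mp p f n = T.Mp p (T.S f) (n + 1) := (Mp_shift T p s hs hreg f n).symm
      _ ≤ _ := le_ciSup hbddS (n + 1)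
end
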